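/- For any tree T on at least 2 vertices, the strong metric dimension of T equals the number of leaves of T minus one. -/

import Mathlib

open SimpleGraph


/-- One step of the zero forcing color-change rule: add every white vertex that is
the unique white neighbor of some black vertex. -/
def zfStep {V : Type*} (G : SimpleGraph V) (B : Set V) : Set V :=
  B ∪ {w | ∃ u ∈ B, G.Adj u w ∧ ∀ x, G.Adj u x → x ∉ B → x = w}

/-- `S` is a zero forcing set if iterating the color-change rule blackens all vertices. -/
def IsZeroForcingSet {V : Type*} (G : SimpleGraph V) (S : Set V) : Prop :=
  ∃ n : ℕ, (zfStep G)^[n] S = Set.univ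

/-- The zero forcing number: minimum cardinality of a zero forcing set. -/
noncomputable def zeroForcingNumber {V : Type*} (G : SimpleGraph V) : ℕ :=
  sInf {n | ∃ S : Set V, S.ncard = n ∧ IsZeroForcingSet G S}

/-- A (finite) graph is a path graph: nonempty, connected, acyclic, max degree ≤ 2. -/
def IsPathGraph {V : Type*} (G : SimpleGraph V) : Prop :=
  Nonempty V ∧ G.Connected ∧ G.IsAcyclic ∧ ∀ v : V, (G.neighborSet v).ncard ≤ 2

/-- The path cover number: minimum number of vertex-disjoint induced paths covering `V`. -/
noncomputable def pathCoverNumber {V : Type*} (G : SimpleGraph V) : ℕ :=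
  sInf {n | ∃ P : Finset (Set V), P.card = n ∧
    (∀ S ∈ P, IsPathGraph (G.induce S)) ∧
    (P : Set (Set V)).PairwiseDisjoint id ∧ ⋃₀ (P : Set (Set V)) = Set.univ}

/-- `u` lies on an `x`–`v` geodesic. -/
def LiesBetween {V : Type*} (G : SimpleGraph V) (x u v : V) : Prop :=
  G.dist x u + G.dist u v = G.dist x v

/-- `x` strongly resolves the pair `u, v`. -/
def StronglyResolves {V : Type*} (G : SimpleGraph V) (x u v : V) : Prop :=
  LiesBetween G x u v ∨ LiesBetween G x v u

/-- `W` is a strong resolving set of `G`. -/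
def IsStrongResolvingSet {V : Type*} (G : SimpleGraph V) (W : Set V) : Prop :=
  ∀ u v : V, u ≠ v → ∃ x ∈ W, StronglyResolves G x u v

/-- The strong metric dimension: minimum cardinality of a strong resolving set. -/
noncomputable def sdim {V : Type*} (G : SimpleGraph V) : ℕ :=
  sInf {n | ∃ W : Set V, W.ncard = n ∧ IsStrongResolvingSet G W}

/-- A leaf is a vertex of degree one. -/
def IsLeaf {V : Type*} (G : SimpleGraph V) (v : V) : Prop :=
  (G.neighborSet v).ncard = 1

/-- `σ(G)`: the number of leaves of `G`. -/
noncomputable def leafCount {V : Type*} (G : SimpleGraph V) : ℕ :=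
  {v | IsLeaf G v}.ncard

section Aux

variable {V : Type*}

private lemma leaf_nbr {T : SimpleGraph V} {u w z : V}
    (hu : IsLeaf T u) (hw : T.Adj u w) (hz : T.Adj u z) : z = w := by
  obtain ⟨a, ha⟩ := Set.ncard_eq_one.mp hu
  have h1 : w ∈ T.neighborSet u := hw
  have h2 : z ∈ T.neighborSet u := hz
  rw [ha, Set.mem_singleton_iff] at h1 h2
  rw [h1, h2]

private lemma dist_to_leaf {T : SimpleGraph V} (hconn : T.Connected) {u w y : V}
    (hu : IsLeaf T u) (hw : T.Adj u w) (hy : y ≠ u) : T.dist y u = T.dist y w + 1 := by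
  obtain ⟨p, hpp, hpl⟩ := hconn.exists_path_of_dist u y
  have h1 : 1 ≤ T.dist u y := hconn.pos_dist_of_ne (Ne.symm hy)
  -- upper bound
  obtain ⟨r, hrp, hrl⟩ := hconn.exists_path_of_dist y w
  have hub : T.dist y u ≤ T.dist y w + 1 := by
    have := SimpleGraph.dist_le (r.concat hw.symm)
    rwa [SimpleGraph.Walk.length_concat, hrl] at this
  cases p with
  | nil => rw [SimpleGraph.dist_self] at h1; omega
  | cons h q =>
    rename_i z
    have hz : z = w := leaf_nbr hu hw h
    have hlb : T.dist w y ≤ q.length := by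
      rw [← hz]; exact SimpleGraph.dist_le q
    simp only [SimpleGraph.Walk.length_cons] at hpl
    have c1 : T.dist y u = T.dist u y := SimpleGraph.dist_comm ..
    have c2 : T.dist y w = T.dist w y := SimpleGraph.dist_comm ..
    omega

private lemma dist_away [DecidableEq V] {T : SimpleGraph V} (hT : T.IsTree) {x y' v : V}
    (hadj : T.Adj x y') (p : T.Walk x v) (hlen : p.length = T.dist x v)
    (he : s(x, y') ∉ p.edges) : T.dist y' v = T.dist x v + 1 := by
  have hconn := hT.isConnected
  have hbr : T.IsBridge s(x, y') :=
    (SimpleGraph.isAcyclic_iff_forall_adj_isBridge.mp hT.IsAcyclic) hadj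
  set G' : SimpleGraph V := T \ SimpleGraph.fromEdgeSet {s(x, y')} with hG'
  have hPsub : ∀ {a b : V} (q : T.Walk a b), s(x, y') ∉ q.edges →
      ∀ e ∈ q.edges, e ∈ G'.edgeSet := by
    intro a b q hq e heq
    simp only [hG', SimpleGraph.edgeSet_sdiff, SimpleGraph.edgeSet_fromEdgeSet,
      SimpleGraph.edgeSet_sdiff_sdiff_isDiag, Set.mem_diff, Set.mem_singleton_iff]
    exact ⟨q.edges_subset_edgeSet heq, fun h' => hq (h' ▸ heq)⟩
  -- every walk from y' to v passes through x
  have key : ∀ w : T.Walk y' v, x ∈ w.support := by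
    intro w
    by_contra hx
    have hew : s(x, y') ∉ w.edges := fun h => hx (w.fst_mem_support_of_mem_edges h)
    have r1 : G'.Reachable x v := ⟨p.transfer G' (hPsub p he)⟩
    have r2 : G'.Reachable y' v := ⟨w.transfer G' (hPsub w hew)⟩
    exact (SimpleGraph.isBridge_iff.mp hbr) (r1.trans r2.symm)
  obtain ⟨w, hwp, hwl⟩ := hconn.exists_path_of_dist y' v
  have hx := key w
  have h1 : T.dist y' x ≤ (w.takeUntil x hx).length := SimpleGraph.dist_le _
  have h2 : T.dist x v ≤ (w.dropUntil x hx).length := SimpleGraph.dist_le _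
  have h3 : (w.takeUntil x hx).length + (w.dropUntil x hx).length = w.length := by
    rw [← SimpleGraph.Walk.length_append, SimpleGraph.Walk.take_spec]
  have h4 : 1 ≤ T.dist y' x := hconn.pos_dist_of_ne hadj.ne'
  have h5 : T.dist y' v ≤ T.dist x v + 1 := by
    have := SimpleGraph.dist_le (SimpleGraph.Walk.cons hadj.symm p)
    rwa [SimpleGraph.Walk.length_cons, hlen] at this
  omega

private lemma exists_leaf_liesBetween [Fintype V] [DecidableEq V] {T : SimpleGraph V}
    (hT : T.IsTree) {u v : V} (huv : u ≠ v) :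
    ∃ x, IsLeaf T x ∧ LiesBetween T x u v := by
  have hconn := hT.isConnected
  set S : Finset V := Finset.univ.filter (fun x => T.dist x u + T.dist u v = T.dist x v) with hS
  have huS : u ∈ S := by simp [hS]
  obtain ⟨x, hxS, hmax⟩ := S.exists_max_image (fun x => T.dist x v) ⟨u, huS⟩
  have hxB : T.dist x u + T.dist u v = T.dist x v := by
    simpa [hS] using hxS
  refine ⟨x, ?_, hxB⟩
  by_contra hleaf
  have hxv : x ≠ v := by
    intro hxveq
    rw [hxveq, SimpleGraph.dist_self] at hxB
    have h0 : T.dist u v = 0 := by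
      have := SimpleGraph.dist_comm (G := T) (u := v) (v := u)
      omega
    exact huv (hconn.dist_eq_zero_iff.mp h0)
  have hd : 1 ≤ T.dist x v := hconn.pos_dist_of_ne hxv
  obtain ⟨p, hpp, hpl⟩ := hconn.exists_path_of_dist x v
  cases p with
  | nil => rw [SimpleGraph.dist_self] at hd; omega
  | cons h q =>
    rename_i y
    have hxq : x ∉ q.support := ((SimpleGraph.Walk.cons_isPath_iff h q).mp hpp).2
    -- x has at least two neighbors
    have hynb : y ∈ T.neighborSet x := h
    have hge2 : 1 < (T.neighborSet x).ncard := by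
      have hne0 : 0 < (T.neighborSet x).ncard :=
        (Set.ncard_pos (Set.toFinite _)).mpr ⟨y, hynb⟩
      have : (T.neighborSet x).ncard ≠ 1 := hleaf
      omega
    obtain ⟨a, b, ha, hb, hab⟩ := (Set.one_lt_ncard_iff (Set.toFinite _)).mp hge2
    obtain ⟨y', hy', hy'y⟩ : ∃ y', y' ∈ T.neighborSet x ∧ y' ≠ y := by
      by_cases hay : a = y
      · exact ⟨b, hb, hay ▸ hab.symm⟩
      · exact ⟨a, ha, hay⟩
    have hadj : T.Adj x y' := hy'
    have he : s(x, y') ∉ (SimpleGraph.Walk.cons h q).edges := by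
      simp only [SimpleGraph.Walk.edges_cons, List.mem_cons]
      rintro (heq | hin)
      · rw [Sym2.eq_iff] at heq
        rcases heq with ⟨-, h2⟩ | ⟨h1, -⟩
        · exact hy'y h2
        · exact h.ne h1
      · exact hxq (q.fst_mem_support_of_mem_edges hin)
    have hdy : T.dist y' v = T.dist x v + 1 := dist_away hT hadj (.cons h q) hpl he
    have hxy1 : T.dist y' x ≤ 1 := by
      have := SimpleGraph.dist_le (SimpleGraph.Walk.cons hadj.symm .nil)
      simpa using this
    have htri1 : T.dist y' u ≤ T.dist y' x + T.dist x u := hconn.dist_triangle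
    have htri2 : T.dist y' v ≤ T.dist y' u + T.dist u v := hconn.dist_triangle
    have hy'S : y' ∈ S := by
      simp only [hS, Finset.mem_filter, Finset.mem_univ, true_and]
      omega
    have := hmax y' hy'S
    omega

end Aux

/-- For any tree on at least 2 vertices, the strong metric dimension equals
the number of leaves minus one. -/
theorem sdim_tree_eq_leafCount_sub_one {V : Type*} [Fintype V]
    (T : SimpleGraph V) (hT : T.IsTree) (h2 : 2 ≤ Fintype.card V) :
    sdim T = leafCount T - 1 := by
  classical
  have hconn := hT.isConnected
  set L : Set V := {v | IsLeaf T v} with hLdef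
  obtain ⟨a, b, hab⟩ := Fintype.exists_pair_of_one_lt_card (by omega) (α := V)
  obtain ⟨l, hl, -⟩ := exists_leaf_liesBetween hT hab
  have hlL : l ∈ L := hl
  set W : Set V := L \ {l} with hWdef
  have hWcard : W.ncard = L.ncard - 1 :=
    Set.ncard_diff_singleton_of_mem hlL
  have hWres : IsStrongResolvingSet T W := by
    intro u v huv
    obtain ⟨x, hx, hxB⟩ := exists_leaf_liesBetween hT huv
    obtain ⟨x', hx', hxB'⟩ := exists_leaf_liesBetween hT huv.symm
    by_cases hxl : x = l
    · by_cases hxl' : x' = l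
      · exfalso
        rw [hxl] at hxB
        rw [hxl'] at hxB'
        have e1 : T.dist l u + T.dist u v = T.dist l v := hxB
        have e2 : T.dist l v + T.dist v u = T.dist l u := hxB'
        have c : T.dist v u = T.dist u v := SimpleGraph.dist_comm ..
        have h0 : T.dist u v = 0 := by omega
        exact huv (hconn.dist_eq_zero_iff.mp h0)
      · exact ⟨x', ⟨hx', hxl'⟩, Or.inr hxB'⟩
    · exact ⟨x, ⟨hx, hxl⟩, Or.inl hxB⟩
  have hmem : L.ncard - 1 ∈ {n | ∃ W : Set V, W.ncard = n ∧ IsStrongResolvingSet T W} :=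
    ⟨W, hWcard, hWres⟩
  have hlb : ∀ n ∈ {n | ∃ W : Set V, W.ncard = n ∧ IsStrongResolvingSet T W},
      L.ncard - 1 ≤ n := by
    rintro n ⟨W', hW'card, hW'res⟩
    have key : ∀ u v, u ∈ L → v ∈ L → u ∉ W' → v ∉ W' → u = v := by
      intro u v hu hv huW hvW
      by_contra huv
      obtain ⟨x, hxW, hres⟩ := hW'res u v huv
      have huleaf : IsLeaf T u := hu
      have hvleaf : IsLeaf T v := hv
      obtain ⟨wu, hwu⟩ : ∃ w, T.Adj u w := by
        obtain ⟨c, hc⟩ := Set.ncard_eq_one.mp huleaf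
        exact ⟨c, by rw [← SimpleGraph.mem_neighborSet, hc]; rfl⟩
      obtain ⟨wv, hwv⟩ : ∃ w, T.Adj v w := by
        obtain ⟨c, hc⟩ := Set.ncard_eq_one.mp hvleaf
        exact ⟨c, by rw [← SimpleGraph.mem_neighborSet, hc]; rfl⟩
      have hres' : LiesBetween T x u v ∨ LiesBetween T x v u := hres
      rcases hres' with h | h
      · have hxu : x = u := by
          by_contra hxu
          have e0 : T.dist x u + T.dist u v = T.dist x v := h
          have e1 := dist_to_leaf hconn huleaf hwu hxu
          have e2 := dist_to_leaf hconn huleaf hwu (Ne.symm huv)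
          have tri : T.dist x v ≤ T.dist x wu + T.dist wu v := hconn.dist_triangle
          have c1 : T.dist u v = T.dist v u := SimpleGraph.dist_comm ..
          have c2 : T.dist v wu = T.dist wu v := SimpleGraph.dist_comm ..
          omega
        exact huW (hxu ▸ hxW)
      · have hxv : x = v := by
          by_contra hxv
          have e0 : T.dist x v + T.dist v u = T.dist x u := h
          have e1 := dist_to_leaf hconn hvleaf hwv hxv
          have e2 := dist_to_leaf hconn hvleaf hwv huv
          have tri : T.dist x u ≤ T.dist x wv + T.dist wv u := hconn.dist_triangle
          have c1 : T.dist v u = T.dist u v := SimpleGraph.dist_comm ..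
          have c2 : T.dist u wv = T.dist wv u := SimpleGraph.dist_comm ..
          omega
        exact hvW (hxv ▸ hxW)
    have hL1 : (L \ W').ncard ≤ 1 :=
      (Set.ncard_le_one (Set.toFinite _)).mpr fun c hc d hd =>
        key c d hc.1 hd.1 hc.2 hd.2
    have hsubset : L ⊆ W' ∪ (L \ W') := by
      intro z hz
      by_cases hzW : z ∈ W'
      · exact Or.inl hzW
      · exact Or.inr ⟨hz, hzW⟩
    have hle : L.ncard ≤ (W' ∪ (L \ W')).ncard :=
      Set.ncard_le_ncard hsubset (Set.toFinite _)
    have hun : (W' ∪ (L \ W')).ncard ≤ W'.ncard + (L \ W').ncard :=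
      Set.ncard_union_le _ _
    omega
  have hfin : sInf {n | ∃ W : Set V, W.ncard = n ∧ IsStrongResolvingSet T W} = L.ncard - 1 :=
    le_antisymm (Nat.sInf_le hmem) (hlb _ (Nat.sInf_mem ⟨_, hmem⟩))
  simpa [sdim, leafCount, hLdef] using hfin
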